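/- The bilinear form ι on Sym^n(ℂ²) given by the symmetrized product of n copies of ε is nondegenerate. -/

import Mathlib

/-- The SU(2)-invariant antisymmetric form on ℂ². -/
def eps (v w : Fin 2 → ℂ) : ℂ := v 0 * w 1 - v 1 * w 0

/-- The bilinear form `ι` on `Sym^n(ℂ²)` given on symmetrized products of spinors. -/
noncomputable def iotaForm (n : ℕ) (v w : Fin n → (Fin 2 → ℂ)) : ℂ :=
  ((n.factorial : ℂ))⁻¹ *
    ∑ σ : Equiv.Perm (Fin n), ∏ k : Fin n, eps (v k) (w (σ k))

/-- The basis vector of `Sym^n(ℂ²)` with `a` factors `e₁` and `n - a` factors `e₀`. -/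
def basisVec (n : ℕ) (a : Fin (n + 1)) : Fin n → (Fin 2 → ℂ) := fun k =>
  if (k : ℕ) < (a : ℕ) then (fun i => if i = 1 then 1 else 0)
  else (fun i => if i = 0 then 1 else 0)

/-- The Gram matrix of `ι` in the monomial basis of `Sym^n(ℂ²)`. -/
noncomputable def iotaGram (n : ℕ) : Matrix (Fin (n + 1)) (Fin (n + 1)) ℂ :=
  fun a b => iotaForm n (basisVec n a) (basisVec n b)

open Finset Equiv

lemma eps_basis (n : ℕ) (a b : Fin (n + 1)) (k j : Fin n) :
    eps (basisVec n a k) (basisVec n b j) =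
      if (k : ℕ) < (a : ℕ) then (if (j : ℕ) < (b : ℕ) then 0 else -1)
      else (if (j : ℕ) < (b : ℕ) then 1 else 0) := by
  simp only [eps, basisVec]
  split_ifs <;> norm_num

/-- A permutation is "good" for `(A, B)` if it matches the `e₁` slots with the `e₀` slots. -/
def IsGood (n A B : ℕ) (σ : Equiv.Perm (Fin n)) : Prop :=
  ∀ k : Fin n, ((k : ℕ) < A ↔ ¬ ((σ k : ℕ) < B))

instance (n A B : ℕ) : DecidablePred (IsGood n A B) := fun _ => by
  unfold IsGood; infer_instance

lemma subtypeCongr_apply_pos {α : Type*} {p q : α → Prop} [DecidablePred p] [DecidablePred q]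
    (e : {x // p x} ≃ {x // q x}) (f : {x // ¬ p x} ≃ {x // ¬ q x}) {x : α} (h : p x) :
    (Equiv.subtypeCongr e f x : α) = e ⟨x, h⟩ := by
  simp [Equiv.subtypeCongr, Equiv.sumCompl_symm_apply_of_pos h]

lemma subtypeCongr_apply_neg {α : Type*} {p q : α → Prop} [DecidablePred p] [DecidablePred q]
    (e : {x // p x} ≃ {x // q x}) (f : {x // ¬ p x} ≃ {x // ¬ q x}) {x : α} (h : ¬ p x) :
    (Equiv.subtypeCongr e f x : α) = f ⟨x, h⟩ := by
  simp [Equiv.subtypeCongr, Equiv.sumCompl_symm_apply_of_neg h]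

/-- Good permutations correspond to pairs of bijections between the blocks. -/
def goodEquiv (n A B : ℕ) :
    {σ : Equiv.Perm (Fin n) // IsGood n A B σ} ≃
      (({k : Fin n // (k : ℕ) < A} ≃ {j : Fin n // ¬ ((j : ℕ) < B)}) ×
       ({k : Fin n // ¬ ((k : ℕ) < A)} ≃ {j : Fin n // (j : ℕ) < B})) where
  toFun σ :=
    ( { toFun := fun k => ⟨σ.1 k, (σ.2 k).mp k.2⟩
        invFun := fun j => ⟨σ.1.symm j, by
          have h := σ.2 (σ.1.symm j)
          rw [Equiv.apply_symm_apply] at h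
          exact h.mpr j.2⟩
        left_inv := fun k => Subtype.ext (σ.1.symm_apply_apply k)
        right_inv := fun j => Subtype.ext (σ.1.apply_symm_apply j) },
      { toFun := fun k => ⟨σ.1 k, not_not.mp (fun hn => k.2 ((σ.2 k).mpr hn))⟩
        invFun := fun j => ⟨σ.1.symm j, fun hk => by
          have h := σ.2 (σ.1.symm j)
          rw [Equiv.apply_symm_apply] at h
          exact (h.mp hk) j.2⟩
        left_inv := fun k => Subtype.ext (σ.1.symm_apply_apply k)
        right_inv := fun j => Subtype.ext (σ.1.apply_symm_apply j) } )
  invFun ef :=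
    ⟨Equiv.subtypeCongr ef.1
        (ef.2.trans (Equiv.subtypeEquivRight fun j => (not_not (a := (j : ℕ) < B)).symm)),
     by
      intro k
      by_cases h : (k : ℕ) < A
      · rw [subtypeCongr_apply_pos (p := fun y : Fin n => (y : ℕ) < A)
          (q := fun y : Fin n => ¬ (y : ℕ) < B) (x := k) _ _ h]
        exact ⟨fun _ => (ef.1 ⟨k, h⟩).2, fun _ => h⟩
      · rw [subtypeCongr_apply_neg (p := fun y : Fin n => (y : ℕ) < A)
          (q := fun y : Fin n => ¬ (y : ℕ) < B) (x := k) _ _ h]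
        have h2 : ¬ ¬ (((ef.2.trans (Equiv.subtypeEquivRight fun j =>
            (not_not (a := (j : ℕ) < B)).symm)) ⟨k, h⟩ : Fin n) : ℕ) < B :=
          ((ef.2.trans (Equiv.subtypeEquivRight fun j =>
            (not_not (a := (j : ℕ) < B)).symm)) ⟨k, h⟩).2
        exact ⟨fun hk => absurd hk h, fun hn => absurd (not_not.mp h2) hn⟩⟩
  left_inv σ := by
    apply Subtype.ext
    apply Equiv.ext
    intro x
    by_cases h : (x : ℕ) < A
    · rw [subtypeCongr_apply_pos (p := fun y : Fin n => (y : ℕ) < A)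
        (q := fun y : Fin n => ¬ (y : ℕ) < B) (x := x) _ _ h]
      rfl
    · rw [subtypeCongr_apply_neg (p := fun y : Fin n => (y : ℕ) < A)
        (q := fun y : Fin n => ¬ (y : ℕ) < B) (x := x) _ _ h]
      rfl
  right_inv ef := by
    refine Prod.ext ?_ ?_
    · apply Equiv.ext
      intro k
      apply Subtype.ext
      simp only [Equiv.coe_fn_mk]
      rw [subtypeCongr_apply_pos (p := fun y : Fin n => (y : ℕ) < A)
        (q := fun y : Fin n => ¬ (y : ℕ) < B) (x := k.1) _ _ k.2]
    · apply Equiv.ext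
      intro k
      apply Subtype.ext
      simp only [Equiv.coe_fn_mk]
      rw [subtypeCongr_apply_neg (p := fun y : Fin n => (y : ℕ) < A)
        (q := fun y : Fin n => ¬ (y : ℕ) < B) (x := k.1) _ _ k.2]
      rfl

lemma card_good (n A B : ℕ) (hA : A ≤ n) (hB : B ≤ n) :
    Fintype.card {σ : Equiv.Perm (Fin n) // IsGood n A B σ} =
      if A + B = n then A.factorial * (n - A).factorial else 0 := by
  have c1 : Fintype.card {k : Fin n // (k : ℕ) < A} = A := Fintype.card_fin_lt_of_le hA
  have c4 : Fintype.card {j : Fin n // (j : ℕ) < B} = B := Fintype.card_fin_lt_of_le hB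
  have c2 : Fintype.card {j : Fin n // ¬ ((j : ℕ) < B)} = n - B := by
    rw [Fintype.card_subtype_compl, Fintype.card_fin, c4]
  have c3 : Fintype.card {k : Fin n // ¬ ((k : ℕ) < A)} = n - A := by
    rw [Fintype.card_subtype_compl, Fintype.card_fin, c1]
  by_cases hAB : A + B = n
  · rw [if_pos hAB, Fintype.card_congr (goodEquiv n A B), Fintype.card_prod,
      Fintype.card_equiv (Fintype.equivOfCardEq (by rw [c1, c2]; omega)),
      Fintype.card_equiv (Fintype.equivOfCardEq (by rw [c3, c4]; omega)), c1, c3]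
  · rw [if_neg hAB, Fintype.card_eq_zero_iff]
    constructor
    intro σ
    have e := (goodEquiv n A B) σ
    have h1 := Fintype.card_congr e.1
    have h2 := Fintype.card_congr e.2
    rw [c1, c2] at h1
    rw [c3, c4] at h2
    omega

lemma prod_good {n A B : ℕ} (hA : A ≤ n) (σ : Equiv.Perm (Fin n)) (h : IsGood n A B σ) :
    (∏ k : Fin n, (if (k : ℕ) < A then (if ((σ k : ℕ)) < B then (0 : ℂ) else -1)
      else (if ((σ k : ℕ)) < B then 1 else 0))) = (-1) ^ A := by
  have step : ∀ k : Fin n,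
      (if (k : ℕ) < A then (if ((σ k : ℕ)) < B then (0 : ℂ) else -1)
        else (if ((σ k : ℕ)) < B then 1 else 0)) =
      (if (k : ℕ) < A then (-1 : ℂ) else 1) := by
    intro k
    by_cases hk : (k : ℕ) < A
    · simp [hk, (h k).mp hk]
    · have : ((σ k : ℕ)) < B := not_not.mp (fun hn => hk ((h k).mpr hn))
      simp [hk, this]
  rw [Finset.prod_congr rfl (fun k _ => step k), Finset.prod_ite, Finset.prod_const,
    Finset.prod_const_one, mul_one]
  congr 1
  rw [← Fintype.card_subtype, Fintype.card_fin_lt_of_le hA]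

lemma prod_notgood {n A B : ℕ} (σ : Equiv.Perm (Fin n)) (h : ¬ IsGood n A B σ) :
    (∏ k : Fin n, (if (k : ℕ) < A then (if ((σ k : ℕ)) < B then (0 : ℂ) else -1)
      else (if ((σ k : ℕ)) < B then 1 else 0))) = 0 := by
  unfold IsGood at h
  push_neg at h
  obtain ⟨k, hk⟩ := h
  apply Finset.prod_eq_zero (Finset.mem_univ k)
  rcases hk with ⟨h1, h2⟩ | ⟨h1, h2⟩
  · simp [h1, h2]
  · simp [Nat.not_lt.mpr h1, Nat.not_lt.mpr h2]

lemma sum_eq (n A B : ℕ) (hA : A ≤ n) (hB : B ≤ n) :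
    (∑ σ : Equiv.Perm (Fin n), ∏ k : Fin n,
        (if (k : ℕ) < A then (if ((σ k : ℕ)) < B then (0 : ℂ) else -1)
          else (if ((σ k : ℕ)) < B then 1 else 0)))
      = if A + B = n then ((A.factorial * (n - A).factorial : ℕ) : ℂ) * (-1) ^ A else 0 := by
  classical
  rw [← Finset.sum_filter_add_sum_filter_not Finset.univ (IsGood n A B)]
  have h2 : (∑ σ ∈ Finset.univ.filter (fun σ => ¬ IsGood n A B σ), ∏ k : Fin n,
      (if (k : ℕ) < A then (if ((σ k : ℕ)) < B then (0 : ℂ) else -1)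
        else (if ((σ k : ℕ)) < B then 1 else 0))) = 0 :=
    Finset.sum_eq_zero fun σ hσ => prod_notgood σ (Finset.mem_filter.mp hσ).2
  rw [h2, add_zero,
    Finset.sum_congr rfl (fun σ hσ => prod_good hA σ (Finset.mem_filter.mp hσ).2),
    Finset.sum_const, nsmul_eq_mul]
  have hcard : (Finset.univ.filter (IsGood n A B)).card =
      if A + B = n then A.factorial * (n - A).factorial else 0 := by
    rw [← Fintype.card_subtype, card_good n A B hA hB]
  rw [hcard]
  split_ifs
  · rfl
  · simp

lemma iotaGram_apply (n : ℕ) (a b : Fin (n + 1)) :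
    iotaGram n a b = if (a : ℕ) + (b : ℕ) = n
      then ((n.factorial : ℂ))⁻¹ *
        ((((a : ℕ).factorial * (n - (a : ℕ)).factorial : ℕ) : ℂ) * (-1) ^ (a : ℕ))
      else 0 := by
  have hA : (a : ℕ) ≤ n := Nat.lt_succ_iff.mp a.2
  have hB : (b : ℕ) ≤ n := Nat.lt_succ_iff.mp b.2
  unfold iotaGram iotaForm
  rw [Finset.sum_congr rfl (fun σ _ =>
    Finset.prod_congr rfl fun k _ => eps_basis n a b k (σ k)), sum_eq n (a : ℕ) (b : ℕ) hA hB]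
  split_ifs
  · rfl
  · rw [mul_zero]

/-- The form `ι` on `Sym^n(ℂ²)` is nondegenerate: its Gram matrix in a basis
has nonzero determinant, equivalently no nonzero vector pairs trivially with
everything. -/
theorem iotaForm_nondegenerate (n : ℕ) :
    (iotaGram n).det ≠ 0 ∧
    ∀ c : Fin (n + 1) → ℂ,
      (∀ b, ∑ a, c a * iotaGram n a b = 0) → c = 0 := by
  classical
  set d : Fin (n + 1) → ℂ := fun a => ((n.factorial : ℂ))⁻¹ *
    ((((a : ℕ).factorial * (n - (a : ℕ)).factorial : ℕ) : ℂ) * (-1) ^ (a : ℕ)) with hd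
  have hdiag : (iotaGram n).submatrix id ⇑(Fin.revPerm : Equiv.Perm (Fin (n + 1)))
      = Matrix.diagonal d := by
    ext a b
    have hb : ((Fin.rev b : Fin (n + 1)) : ℕ) = n - (b : ℕ) := by
      rw [Fin.val_rev]; omega
    have hA : (a : ℕ) ≤ n := Nat.lt_succ_iff.mp a.2
    have hB : (b : ℕ) ≤ n := Nat.lt_succ_iff.mp b.2
    simp only [Matrix.submatrix_apply, id_eq, Fin.revPerm_apply, Matrix.diagonal,
      Matrix.of_apply, iotaGram_apply, hb]
    have hiff : (a : ℕ) + (n - (b : ℕ)) = n ↔ a = b := by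
      rw [Fin.ext_iff]; omega
    by_cases h : a = b
    · rw [if_pos (hiff.mpr h), if_pos h]
    · rw [if_neg (fun hc => h (hiff.mp hc)), if_neg h]
  have hdne : ∀ a : Fin (n + 1), d a ≠ 0 := by
    intro a
    apply mul_ne_zero
    · exact inv_ne_zero (Nat.cast_ne_zero.mpr n.factorial_ne_zero)
    · exact mul_ne_zero (Nat.cast_ne_zero.mpr
        (Nat.mul_ne_zero (Nat.factorial_ne_zero _) (Nat.factorial_ne_zero _)))
        (pow_ne_zero _ (by norm_num))
  have hdet0 : (Matrix.diagonal d).det ≠ 0 := by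
    rw [Matrix.det_diagonal]
    exact Finset.prod_ne_zero_iff.mpr fun a _ => hdne a
  have hdet : (iotaGram n).det ≠ 0 := by
    intro h0
    have hp := Matrix.det_permute' (Fin.revPerm : Equiv.Perm (Fin (n + 1))) (iotaGram n)
    rw [hdiag, h0, mul_zero] at hp
    exact hdet0 hp
  refine ⟨hdet, fun c hc => ?_⟩
  have hu : IsUnit (iotaGram n).det := Ne.isUnit hdet
  have h1 : Matrix.vecMul c (iotaGram n) = 0 := by
    funext b
    simpa [Matrix.vecMul, dotProduct] using hc b
  calc c = Matrix.vecMul c 1 := (Matrix.vecMul_one c).symm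
    _ = Matrix.vecMul c ((iotaGram n) * (iotaGram n)⁻¹) := by
        rw [Matrix.mul_nonsing_inv _ hu]
    _ = Matrix.vecMul (Matrix.vecMul c (iotaGram n)) (iotaGram n)⁻¹ :=
        (Matrix.vecMul_vecMul c _ _).symm
    _ = 0 := by rw [h1, Matrix.zero_vecMul]
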